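/- Fix h, δ, s > 0, B = sδ/(s+δ), and e with 0 < e < B (so e < 1). For m > 0 let u₁(m) be the unique positive root of (h+B)u² + [m(h+B)+e−1−B]u + m(e−B) = 0. Then u₁ is differentiable in m and du₁/dm = −u₁/[C(m+u₁)²] < 0, where C = (h+B) − m/(m+u₁)² > 0. Consequently the total population T(m) = u₁(m) + (s+δu₁(m))/(s+δ) is strictly decreasing in m. -/

import Mathlib

open Set

/-- For h, δ, s > 0, B = sδ/(s+δ), 0 < e < B, let u₁(m) be (for
each m > 0) the unique positive root of (h+B)u² + [m(h+B)+e−1−B]u + m(e−B) = 0.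
Then u₁ is differentiable with du₁/dm = −u₁/[C(m+u₁)²] < 0 where
C = (h+B) − m/(m+u₁)² > 0, and the total population
T(m) = u₁(m) + (s+δu₁(m))/(s+δ) is strictly decreasing on (0,∞). -/
theorem stmt14 (h δ s e : ℝ) (hh : 0 < h) (hδ : 0 < δ) (hs : 0 < s)
    (B : ℝ) (hB : B = s * δ / (s + δ)) (he0 : 0 < e) (heB : e < B)
    (u₁ : ℝ → ℝ)
    (hroot : ∀ m : ℝ, 0 < m → 0 < u₁ m ∧
      (h + B) * (u₁ m) ^ 2 + (m * (h + B) + e - 1 - B) * (u₁ m) + m * (e - B) = 0)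
    (huniq : ∀ m : ℝ, 0 < m → ∀ u : ℝ, 0 < u →
      (h + B) * u ^ 2 + (m * (h + B) + e - 1 - B) * u + m * (e - B) = 0 → u = u₁ m) :
    (∀ m : ℝ, 0 < m →
      ((h + B) - m / (m + u₁ m) ^ 2 > 0) ∧
      HasDerivAt u₁ (-(u₁ m) / (((h + B) - m / (m + u₁ m) ^ 2) * (m + u₁ m) ^ 2)) m ∧
      -(u₁ m) / (((h + B) - m / (m + u₁ m) ^ 2) * (m + u₁ m) ^ 2) < 0) ∧
    StrictAntiOn (fun m => u₁ m + (s + δ * u₁ m) / (s + δ)) (Ioi (0 : ℝ)) := by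
  have hBpos : 0 < B := by rw [hB]; positivity
  set a : ℝ := h + B with ha_def
  have ha : 0 < a := by simp only [ha_def]; positivity
  set β : ℝ := e - 1 - B with hβ_def
  set γ : ℝ := e - B with hγ_def
  have hγ : γ < 0 := by simp only [hγ_def]; linarith
  clear_value a β γ
  have hβγ : β = γ - 1 := by rw [hβ_def, hγ_def]; ring
  have hDpos : ∀ m : ℝ, 0 < m → 0 < (a * m + β) ^ 2 - 4 * a * γ * m := by
    intro m hm
    have h1 : 0 < 4 * a * (-γ) * m := by
      have := mul_pos (mul_pos (mul_pos four_pos ha) (neg_pos.mpr hγ)) hm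
      linarith
    nlinarith [sq_nonneg (a * m + β)]
  set f : ℝ → ℝ :=
    fun m => (-(a * m + β) + Real.sqrt ((a * m + β) ^ 2 - 4 * a * γ * m)) / (2 * a) with hf_def
  clear_value f
  have key : ∀ m : ℝ, 0 < m → u₁ m = f m := by
    intro m hm
    have hD' := hDpos m hm
    set S : ℝ := Real.sqrt ((a * m + β) ^ 2 - 4 * a * γ * m) with hS_def
    have hsq : S ^ 2 = (a * m + β) ^ 2 - 4 * a * γ * m := Real.sq_sqrt hD'.le
    have hS0 : 0 ≤ S := Real.sqrt_nonneg _
    clear_value S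
    have haux : 0 < 4 * a * (-γ) * m :=
      mul_pos (mul_pos (mul_pos four_pos ha) (neg_pos.mpr hγ)) hm
    have hsgt : a * m + β < S := by
      by_contra hc
      push_neg at hc
      have h1 : 0 ≤ a * m + β - S ∨ 0 ≤ -(a * m + β) - S := by
        rcases le_or_gt 0 (a * m + β) with h' | h'
        · left; linarith
        · right
          nlinarith
      rcases h1 with h1 | h1
      · nlinarith [mul_nonneg h1 (by nlinarith : (0:ℝ) ≤ a * m + β + S)]
      · nlinarith [mul_nonneg h1 (by nlinarith : (0:ℝ) ≤ -(a * m + β) + S)]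
    have hane : (2 * a) ≠ 0 := by positivity
    have hfm : f m = (-(a * m + β) + S) / (2 * a) := by
      simp only [hf_def]; rw [← hS_def]
    have hfpos : 0 < f m := by
      rw [hfm]
      apply div_pos (by linarith) (by linarith)
    have h4 : f m * (2 * a) = -(a * m + β) + S := by
      rw [hfm]; exact div_mul_cancel₀ _ hane
    have hQf' : a * (f m) ^ 2 + (a * m + β) * (f m) + γ * m = 0 := by
      have h5 : (4 * a) * (a * (f m) ^ 2 + (a * m + β) * (f m) + γ * m) = 0 := by
        linear_combination (2 * a * f m + (a * m + β) + S) * h4 + hsq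
      exact (mul_eq_zero.mp h5).resolve_left (by positivity)
    have hcoef : m * a + e - 1 - B = a * m + β := by rw [hβ_def]; ring
    have hQf : a * (f m) ^ 2 + (m * a + e - 1 - B) * (f m) + m * γ = 0 := by
      rw [hcoef]; linear_combination hQf'
    exact (huniq m hm (f m) hfpos hQf).symm
  have main : ∀ m : ℝ, 0 < m →
      (a - m / (m + u₁ m) ^ 2 > 0) ∧
      HasDerivAt u₁ (-(u₁ m) / ((a - m / (m + u₁ m) ^ 2) * (m + u₁ m) ^ 2)) m ∧
      -(u₁ m) / ((a - m / (m + u₁ m) ^ 2) * (m + u₁ m) ^ 2) < 0 := by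
    intro m hm
    obtain ⟨hu_pos, hQ⟩ := hroot m hm
    set u : ℝ := u₁ m with hu_def
    clear_value u
    have hQ' : a * u ^ 2 + (a * m + β) * u + γ * m = 0 := by
      simp only [hβ_def, hγ_def] at hQ ⊢
      linear_combination hQ
    have hmu : 0 < m + u := by linarith
    have hD' := hDpos m hm
    set S : ℝ := Real.sqrt ((a * m + β) ^ 2 - 4 * a * γ * m) with hS_def
    have hsq : S ^ 2 = (a * m + β) ^ 2 - 4 * a * γ * m := Real.sq_sqrt hD'.le
    have hSpos : 0 < S := Real.sqrt_pos.mpr hD'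
    clear_value S
    have hs_eq : S = 2 * a * u + a * m + β := by
      have hfm : u = f m := by rw [hu_def]; exact key m hm
      have h2 : f m = (-(a * m + β) + S) / (2 * a) := by
        simp only [hf_def]; rw [← hS_def]
      have hane : (2 * a) ≠ 0 := by positivity
      have h3 : u * (2 * a) = -(a * m + β) + S := by
        rw [hfm, h2]; exact div_mul_cancel₀ _ hane
      linarith
    have heq1 : (m + u) * (a * u + γ) = u := by linear_combination hQ' - u * hβγ
    have hp1 : 0 < a * u + γ := by nlinarith [heq1]
    have hident : (a * u + γ) * (a * (m + u) ^ 2 - m) = u * (2 * a * u + a * m + β) := by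
      linear_combination (a * (m + u) - 1) * hQ' - a * (m + u) * u * hβγ
    have hden_pos : 0 < a * (m + u) ^ 2 - m := by
      have hrhs : 0 < u * (2 * a * u + a * m + β) := by
        rw [← hs_eq]; exact mul_pos hu_pos hSpos
      have h6 : 0 < (a * u + γ) * (a * (m + u) ^ 2 - m) := hident ▸ hrhs
      rcases mul_pos_iff.mp h6 with ⟨_, h7⟩ | ⟨h7, _⟩
      · exact h7
      · linarith
    have hmune : (m + u) ≠ 0 := ne_of_gt hmu
    have hden_eq : (a - m / (m + u) ^ 2) * (m + u) ^ 2 = a * (m + u) ^ 2 - m := by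
      field_simp
    have hC_pos : a - m / (m + u) ^ 2 > 0 := by
      have h2 : (0:ℝ) < (m + u) ^ 2 := by positivity
      have h3 : 0 < (a - m / (m + u) ^ 2) * (m + u) ^ 2 := hden_eq ▸ hden_pos
      rcases mul_pos_iff.mp h3 with ⟨h4, _⟩ | ⟨_, h4⟩
      · exact h4
      · linarith
    -- derivative of f
    have hDderiv : HasDerivAt (fun x : ℝ => (a * x + β) ^ 2 - 4 * a * γ * x)
        (2 * (a * m + β) * a - 4 * a * γ) m := by
      have h1 : HasDerivAt (fun x : ℝ => (a * x + β) ^ 2) (2 * (a * m + β) * a) m := by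
        have := (((hasDerivAt_id m).const_mul a).add_const β).fun_pow 2
        simpa [mul_comm, mul_assoc, mul_left_comm] using this
      have h2 : HasDerivAt (fun x : ℝ => 4 * a * γ * x) (4 * a * γ) m := by
        simpa using (hasDerivAt_id m).const_mul (4 * a * γ)
      simpa using h1.fun_sub h2
    have hsqrtD : HasDerivAt (fun x => Real.sqrt ((a * x + β) ^ 2 - 4 * a * γ * x))
        ((2 * (a * m + β) * a - 4 * a * γ) / (2 * S)) m := by
      have := (Real.hasDerivAt_sqrt (ne_of_gt hD')).comp m hDderiv
      simpa [hS_def, div_eq_mul_inv, mul_comm, Function.comp_def] using this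
    have hfderiv : HasDerivAt f
        ((-a + (2 * (a * m + β) * a - 4 * a * γ) / (2 * S)) / (2 * a)) m := by
      have h1 : HasDerivAt (fun x : ℝ => -(a * x + β)) (-a) m := by
        have := (((hasDerivAt_id m).const_mul a).add_const β).fun_neg
        simpa using this
      rw [hf_def]
      exact (h1.add hsqrtD).div_const (2 * a)
    have hSne : S ≠ 0 := ne_of_gt hSpos
    have hane : a ≠ 0 := ne_of_gt ha
    have hSne' : 2 * a * u + a * m + β ≠ 0 := by rw [← hs_eq]; exact hSne
    have step1 : (-a + (2 * (a * m + β) * a - 4 * a * γ) / (2 * S)) / (2 * a)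
        = -(a * u + γ) / S := by
      rw [hs_eq]
      have hD0 : a * (2 * u + m) + β ≠ 0 := by rw [show a * (2 * u + m) + β = S by rw [hs_eq]; ring]; exact hSpos.ne'
      field_simp
      ring
    have step2 : -(a * u + γ) / S = -u / (a * (m + u) ^ 2 - m) := by
      rw [hs_eq, div_eq_div_iff hSne' (ne_of_gt hden_pos)]
      linear_combination -hident
    have hval : (-a + (2 * (a * m + β) * a - 4 * a * γ) / (2 * S)) / (2 * a)
        = -u / ((a - m / (m + u) ^ 2) * (m + u) ^ 2) := by
      rw [step1, step2, hden_eq]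
    have hu₁deriv : HasDerivAt u₁
        (-u / ((a - m / (m + u) ^ 2) * (m + u) ^ 2)) m := by
      rw [← hval]
      apply hfderiv.congr_of_eventuallyEq
      filter_upwards [eventually_gt_nhds hm] with x hx
      exact key x hx
    refine ⟨hC_pos, hu₁deriv, ?_⟩
    apply div_neg_of_neg_of_pos (by linarith)
    have h2 : (0:ℝ) < (m + u) ^ 2 := by positivity
    exact mul_pos hC_pos h2
  refine ⟨main, ?_⟩
  have hsδ : 0 < s + δ := by linarith
  apply strictAntiOn_of_deriv_neg (convex_Ioi 0)
  · intro x hx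
    obtain ⟨_, hd, _⟩ := main x hx
    have hT : HasDerivAt (fun m => u₁ m + (s + δ * u₁ m) / (s + δ))
        (-(u₁ x) / ((a - x / (x + u₁ x) ^ 2) * (x + u₁ x) ^ 2)
          + (δ * (-(u₁ x) / ((a - x / (x + u₁ x) ^ 2) * (x + u₁ x) ^ 2))) / (s + δ)) x :=
      hd.add (((hd.const_mul δ).const_add s).div_const (s + δ))
    exact hT.differentiableAt.continuousAt.continuousWithinAt
  · intro x hx
    rw [interior_Ioi] at hx
    obtain ⟨hC, hd, hneg⟩ := main x hx
    set d := -(u₁ x) / ((a - x / (x + u₁ x) ^ 2) * (x + u₁ x) ^ 2) with hd_def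
    clear_value d
    have hT : HasDerivAt (fun m => u₁ m + (s + δ * u₁ m) / (s + δ))
        (d + (δ * d) / (s + δ)) x :=
      hd.add (((hd.const_mul δ).const_add s).div_const (s + δ))
    rw [hT.deriv]
    have h1 : (δ * d) / (s + δ) < 0 :=
      div_neg_of_neg_of_pos (mul_neg_of_pos_of_neg hδ hneg) hsδ
    linarith
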